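/- The identity [[-8,0],[0,-1/8]] = X^{12} (Y X^{-1})^2 X^{-1} Y^{-2} holds in GL_2(Q), where X = [[1,3/2],[0,1]] and Y = [[1,0],[3/2,1]]. In particular [[-8,0],[0,-1/8]] lies in the subgroup of SL_2(Z[1/2]) generated by X and Y. -/

import Mathlib

abbrev SL2Q := Matrix.SpecialLinearGroup (Fin 2) ℚ

/-- A = [[1,0],[1,1]] -/
def matA : SL2Q := ⟨!![1,0;1,1], by norm_num [Matrix.det_fin_two_of]⟩
/-- B = [[0,1],[-1,0]] -/
def matB : SL2Q := ⟨!![0,1;-1,0], by norm_num [Matrix.det_fin_two_of]⟩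
/-- Q_q = [[1,q],[0,1]] -/
def matQ (q : ℚ) : SL2Q := ⟨!![1,q;0,1], by norm_num [Matrix.det_fin_two_of]⟩
/-- U_p = [[p,0],[0,1/p]] -/
def matU (p : ℚ) (hp : p ≠ 0) : SL2Q := ⟨!![p,0;0,p⁻¹], by rw [Matrix.det_fin_two_of]; field_simp; norm_num⟩
/-- lower unipotent [[1,0],[x,1]] -/
def matL (x : ℚ) : SL2Q := ⟨!![1,0;x,1], by norm_num [Matrix.det_fin_two_of]⟩

/-- the matrix [[-8,0],[0,-1/8]] -/
def matD : SL2Q := ⟨!![-8,0;0,-(1/8)], by norm_num [Matrix.det_fin_two_of]⟩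

lemma matQ_inv' (q : ℚ) : (matQ q)⁻¹ = matQ (-q) := by
  apply inv_eq_of_mul_eq_one_right
  ext i j
  fin_cases i <;> fin_cases j <;>
    simp only [Matrix.SpecialLinearGroup.coe_mul] <;>
    simp [matQ, Matrix.SpecialLinearGroup.coe_mul, Matrix.mul_apply, Fin.sum_univ_two]

lemma matL_inv' (x : ℚ) : (matL x)⁻¹ = matL (-x) := by
  apply inv_eq_of_mul_eq_one_right
  ext i j
  fin_cases i <;> fin_cases j <;>
    simp only [Matrix.SpecialLinearGroup.coe_mul] <;>
    simp [matL, Matrix.SpecialLinearGroup.coe_mul, Matrix.mul_apply, Fin.sum_univ_two]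

theorem stmt19 :
    matD = (matQ (3/2))^12 * (matL (3/2) * (matQ (3/2))⁻¹)^2 * (matQ (3/2))⁻¹ *
      (matL (3/2))^(-2:ℤ) ∧
    matD ∈ Subgroup.closure {matQ (3/2), matL (3/2)} := by
  have hQ : matQ (3/2) ∈ Subgroup.closure {matQ (3/2), matL (3/2)} :=
    Subgroup.subset_closure (by simp)
  have hL : matL (3/2) ∈ Subgroup.closure {matQ (3/2), matL (3/2)} :=
    Subgroup.subset_closure (by simp)
  have heq : matD = (matQ (3/2))^12 * (matL (3/2) * (matQ (3/2))⁻¹)^2 * (matQ (3/2))⁻¹ *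
      (matL (3/2))^(-2:ℤ) := by
    rw [zpow_neg, show ((2:ℤ) = (2:ℕ)) from rfl, zpow_natCast, sq (matL (3/2)), mul_inv_rev,
      matL_inv', matQ_inv']
    ext i j
    fin_cases i <;> fin_cases j <;>
      simp only [Matrix.SpecialLinearGroup.coe_mul, Matrix.SpecialLinearGroup.coe_pow] <;>
      norm_num [matQ, matL, matD, pow_succ, Matrix.SpecialLinearGroup.coe_mul, Matrix.mul_apply,
        Fin.sum_univ_two]
  refine ⟨heq, heq ▸ ?_⟩
  exact mul_mem (mul_mem (mul_mem (pow_mem hQ 12) (pow_mem (mul_mem hL (inv_mem hQ)) 2))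
    (inv_mem hQ)) (zpow_mem hL _)
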